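/- arXiv:1801.08313 — 2 statements merged into one kernel-verified Lean document; each statement's English description precedes it below -/
import Mathlib

section
/- Let 𝔸 = ℝ[s_{R_1},…,s_{R_k}] ⊂ Λ_{(k)} = ℝ[h_1,…,h_k], with fraction fields 𝕂 and 𝕃 respectively. Then each h_a (a = 1,…,k) is algebraic over 𝕂, the field 𝕃 is a finite algebraic extension of 𝕂 of degree [𝕃:𝕂] = k!, and the set of k-Schur functions indexed by the k-irreducible partitions forms a 𝕂-basis of 𝕃. -/
open MvPolynomial

/-- `Λ_(k) = ℝ[h_1,…,h_k]`, modelled as `MvPolynomial (Fin k) ℝ` with `X i = h_{i+1}`. -/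
noncomputable abbrev Lambdak (k : ℕ) := MvPolynomial (Fin k) ℝ

/-- `h_n` for `n ∈ ℤ`: `h_0 = 1`, `h_n = X (n-1)` for `1 ≤ n ≤ k`, `0` otherwise. -/
noncomputable def hsym (k : ℕ) (n : ℤ) : Lambdak k :=
  if hn : 0 < n ∧ n ≤ (k : ℤ) then X ⟨(n - 1).toNat, by omega⟩
  else if n = 0 then 1 else 0

/-- The rectangle Schur function `s_{R_{a+1}}`, `R_b = ((k-b+1)^b)`, via Jacobi-Trudi. -/
noncomputable def sR (k : ℕ) (a : Fin k) : Lambdak k :=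
  (Matrix.of fun i j : Fin (a.val + 1) =>
    hsym k ((((k : ℤ) - a.val) - i.val) + j.val)).det

/-- A `k`-irreducible partition, encoded by its part multiplicities:
`m j` is the number of parts equal to `j+1`, and irreducibility means that
there are at most `k - s` parts equal to `s` for each `s = 1,…,k`.
There are exactly `k!` such partitions. -/
def Irr (k : ℕ) : Type := { m : Fin k → ℕ // ∀ j : Fin k, m j + j.val + 1 ≤ k }

/-- `𝕃 = ℝ(h_1,…,h_k)`, the fraction field of `Λ_(k)`. -/
noncomputable abbrev FieldL (k : ℕ) := FractionRing (Lambdak k)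

/-- `𝕂 = ℝ(s_{R_1},…,s_{R_k})`, the subfield of `𝕃` generated over `ℝ` by the
rectangle Schur functions. -/
noncomputable def FieldK (k : ℕ) : IntermediateField ℝ (FieldL k) :=
  IntermediateField.adjoin ℝ
    (Set.range fun a => algebraMap (Lambdak k) (FieldL k) (sR k a))

def irrEquiv (k : ℕ) : Irr k ≃ (∀ j : Fin k, Fin (k - j.val)) where
  toFun m := fun j => ⟨m.1 j, by have := m.2 j; omega⟩
  invFun v := ⟨fun j => (v j).val, fun j => by
    have := (v j).isLt; show (v j).val + j.val + 1 ≤ k; omega⟩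
  left_inv m := rfl
  right_inv v := rfl

noncomputable instance (k : ℕ) : Fintype (Irr k) := Fintype.ofEquiv _ (irrEquiv k).symm
instance (k : ℕ) : DecidableEq (Irr k) := fun a b =>
  decidable_of_iff (a.1 = b.1) (by unfold Irr; exact Subtype.ext_iff.symm)

lemma card_irr (k : ℕ) : Fintype.card (Irr k) = k.factorial := by
  rw [Fintype.card_congr (irrEquiv k), Fintype.card_pi]
  simp only [Fintype.card_fin]
  rw [Fin.prod_univ_eq_prod_range (fun j => k - j) k]
  calc ∏ j ∈ Finset.range k, (k - j)
      = ∏ j ∈ Finset.range k, ((k - 1 - j) + 1) := by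
        refine Finset.prod_congr rfl fun j hj => ?_
        rw [Finset.mem_range] at hj; omega
    _ = ∏ j ∈ Finset.range k, (j + 1) := Finset.prod_range_reflect (fun j => j + 1) k
    _ = k.factorial := Finset.prod_range_add_one_eq_factorial k


set_option maxHeartbeats 1000000 in
set_option synthInstance.maxHeartbeats 200000 in
/-- assuming the factorization property of `k`-Schur functions
(every `k`-Schur function is uniquely a monomial in the rectangle Schur
functions times an irreducible `k`-Schur function, and the `k`-Schur functions
form an `ℝ`-basis of `Λ_(k)`), each `h_a` is algebraic over `𝕂`, the extension
`𝕃/𝕂` is finite of degree `k!`, and the irreducible `k`-Schur functions form a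
`𝕂`-basis of `𝕃`. -/
theorem field_extension_kSchur (k : ℕ) (hk : 0 < k)
    (sIrr : Irr k → Lambdak k)
    (B : Module.Basis ((Fin k → ℕ) × Irr k) ℝ (Lambdak k))
    (hB : ∀ (p : Fin k → ℕ) (κ : Irr k),
      B (p, κ) = (∏ a : Fin k, sR k a ^ p a) * sIrr κ) :
    (∀ a : Fin k,
        IsAlgebraic (FieldK k) (algebraMap (Lambdak k) (FieldL k) (X a)))
    ∧ FiniteDimensional (FieldK k) (FieldL k)
    ∧ Module.finrank (FieldK k) (FieldL k) = k.factorial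
    ∧ ∃ b : Module.Basis (Irr k) (FieldK k) (FieldL k),
        ∀ κ : Irr k, b κ = algebraMap (Lambdak k) (FieldL k) (sIrr κ) := by
  classical
  set φ : Lambdak k →+* FieldL k := (algebraMap (Lambdak k) (FieldL k)) with hφdef
  have hφinj : Function.Injective φ := IsFractionRing.injective _ _
  set v : Fin k → FieldL k := fun a => φ (sR k a) with hvdef
  set w : Irr k → FieldL k := fun κ => φ (sIrr κ) with hwdef
  have hcomp : ∀ t : MvPolynomial (Fin k) ℝ, φ (aeval (sR k) t) = aeval v t := by
    intro t
    have := comp_aeval_apply (f := sR k)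
      (IsScalarTower.toAlgHom ℝ (Lambdak k) (FieldL k)) t
    simpa [hvdef, hφdef] using this
  have hvK : ∀ a, v a ∈ FieldK k := fun a =>
    IntermediateField.subset_adjoin ℝ _ ⟨a, rfl⟩
  have hsmulK : ∀ (c : FieldK k) (x : FieldL k), c • x = (c : FieldL k) * x :=
    fun c x => rfl
  -- key linear-independence fact in Λ
  have key : ∀ P : Irr k → MvPolynomial (Fin k) ℝ,
      (∑ κ : Irr k, aeval (sR k) (P κ) * sIrr κ) = 0 → ∀ κ, P κ = 0 := by
    intro P hP κ₀
    rw [MvPolynomial.eq_zero_iff]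
    intro p₀
    have expand : ∀ κ : Irr k, aeval (sR k) (P κ) * sIrr κ
        = ∑ p ∈ (P κ).support, (P κ).coeff p • B (⇑p, κ) := by
      intro κ
      rw [aeval_def, eval₂_eq', Finset.sum_mul]
      refine Finset.sum_congr rfl fun p _ => ?_
      rw [hB, Algebra.smul_def]; ring
    rw [Finset.sum_congr rfl fun κ _ => expand κ] at hP
    have h0 : (B.repr (∑ κ : Irr k,
        ∑ p ∈ (P κ).support, (P κ).coeff p • B (⇑p, κ))) (⇑p₀, κ₀) = 0 := by
      rw [hP]; simp
    rw [map_sum, Finsupp.finset_sum_apply] at h0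
    have h1 : ∀ κ : Irr k,
        (B.repr (∑ p ∈ (P κ).support, (P κ).coeff p • B (⇑p, κ))) (⇑p₀, κ₀)
          = if κ = κ₀ then (if p₀ ∈ (P κ).support then (P κ).coeff p₀ else 0) else 0 := by
      intro κ
      rw [map_sum, Finsupp.finset_sum_apply]
      have h2 : ∀ p ∈ (P κ).support,
          (B.repr ((P κ).coeff p • B (⇑p, κ))) (⇑p₀, κ₀)
            = if κ = κ₀ ∧ p = p₀ then (P κ).coeff p else 0 := by
        intro p _
        rw [map_smul, Module.Basis.repr_self, Finsupp.smul_apply, Finsupp.single_apply]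
        by_cases h : κ = κ₀ ∧ p = p₀
        · obtain ⟨ha, hb'⟩ := h; subst ha; subst hb'; simp
        · rw [if_neg h, if_neg, smul_zero]
          intro hc
          rw [Prod.mk.injEq] at hc
          exact h ⟨hc.2, DFunLike.coe_injective hc.1⟩
      rw [Finset.sum_congr rfl h2]
      by_cases hκ : κ = κ₀
      · subst hκ
        simp only [true_and, if_true]
        exact Finset.sum_ite_eq' _ _ _
      · rw [if_neg hκ]
        exact Finset.sum_eq_zero fun p _ => if_neg (fun hc => hκ hc.1)
    rw [Finset.sum_congr rfl fun κ _ => h1 κ, Finset.sum_ite_eq' Finset.univ κ₀] at h0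
    simp only [Finset.mem_univ, if_true] at h0
    by_cases hp₀ : p₀ ∈ (P κ₀).support
    · rw [if_pos hp₀] at h0; exact h0
    · exact MvPolynomial.notMem_support_iff.mp hp₀
  -- the candidate span
  set M : Submodule (FieldK k) (FieldL k) := Submodule.span (FieldK k) (Set.range w)
    with hMdef
  have hBM : ∀ i : (Fin k → ℕ) × Irr k, φ (B i) ∈ M := by
    rintro ⟨p, κ⟩
    rw [hB, map_mul]
    have hu : (∏ a : Fin k, v a ^ p a) ∈ FieldK k :=
      prod_mem fun a _ => pow_mem (hvK a) _
    have hpr : φ (∏ a : Fin k, sR k a ^ p a) = ∏ a : Fin k, v a ^ p a := by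
      rw [map_prod]; simp [hvdef]
    rw [hpr]
    exact M.smul_mem ⟨_, hu⟩ (Submodule.subset_span ⟨κ, rfl⟩)
  have hmemΛ : ∀ f : Lambdak k, φ f ∈ M := by
    intro f
    have hf : f ∈ Submodule.span ℝ (Set.range ⇑B) := by rw [B.span_eq]; trivial
    refine Submodule.span_induction ?_ ?_ ?_ ?_ hf
    · rintro x ⟨i, rfl⟩; exact hBM i
    · simpa using M.zero_mem
    · intro x y _ _ hx hy; rw [map_add]; exact M.add_mem hx hy
    · intro c x _ hx
      have hcx : φ (c • x) = c • φ x := by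
        calc φ (c • x) = φ (algebraMap ℝ (Lambdak k) c * x) := by
              rw [Algebra.smul_def]
          _ = φ (algebraMap ℝ (Lambdak k) c) * φ x := map_mul _ _ _
          _ = algebraMap ℝ (FieldL k) c * φ x := by
              rw [← IsScalarTower.algebraMap_apply ℝ (Lambdak k) (FieldL k)]
          _ = c • φ x := (Algebra.smul_def c (φ x)).symm
      rw [hcx]
      exact M.smul_of_tower_mem c hx
  have hmul : ∀ g : Lambdak k, ∀ x ∈ M, φ g * x ∈ M := by
    intro g x hx
    refine Submodule.span_induction ?_ ?_ ?_ ?_ hx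
    · rintro y ⟨κ, rfl⟩
      rw [show φ g * w κ = φ (g * sIrr κ) by rw [map_mul]]
      exact hmemΛ _
    · simpa using M.zero_mem
    · intro a b _ _ ha hb; rw [mul_add]; exact M.add_mem ha hb
    · intro c a _ ha
      rw [mul_smul_comm]
      exact M.smul_mem c ha
  haveI hMfd : FiniteDimensional (FieldK k) M := by
    rw [hMdef]
    exact FiniteDimensional.span_of_finite _ (Set.finite_range w)
  have hinv : ∀ g : Lambdak k, g ≠ 0 → ∃ m ∈ M, φ g * m = 1 := by
    intro g hg
    have hφg : φ g ≠ 0 := fun h => hg (hφinj (by simpa using h))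
    have hT : ∀ x ∈ M, (LinearMap.mulLeft (FieldK k) (φ g)) x ∈ M :=
      fun x hx => hmul g x hx
    set T : M →ₗ[FieldK k] M := (LinearMap.mulLeft (FieldK k) (φ g)).restrict hT
      with hTdef
    have hTinj : Function.Injective T := by
      intro x y hxy
      have hxy' := congrArg Subtype.val hxy
      simp only [hTdef, LinearMap.restrict_apply, LinearMap.mulLeft_apply] at hxy'
      exact Subtype.ext (mul_left_cancel₀ hφg hxy')
    have hTsurj := LinearMap.surjective_of_injective hTinj
    obtain ⟨m, hm⟩ := hTsurj ⟨1, by simpa using hmemΛ 1⟩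
    refine ⟨m, m.2, ?_⟩
    have hm' := congrArg Subtype.val hm
    simpa [hTdef, LinearMap.restrict_apply] using hm'
  have hspan : ⊤ ≤ M := by
    intro x _
    obtain ⟨f, g, hg, hx⟩ := IsFractionRing.div_surjective (A := Lambdak k) x
    have hg0 : g ≠ 0 := nonZeroDivisors.ne_zero hg
    obtain ⟨m, hmM, hm1⟩ := hinv g hg0
    have hminv : (φ g)⁻¹ = m := inv_eq_of_mul_eq_one_right hm1
    have hxm : x = φ f * m := by rw [← hx, div_eq_mul_inv, hminv]
    rw [hxm]
    exact hmul f m hmM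
  -- linear independence over K
  have hind : LinearIndependent (FieldK k) w := by
    rw [Fintype.linearIndependent_iff]
    intro g hg κ₀
    have hden : ∀ κ : Irr k, ∃ r s : MvPolynomial (Fin k) ℝ,
        aeval (sR k) s ≠ 0 ∧
          (g κ : FieldL k) * φ (aeval (sR k) s) = φ (aeval (sR k) r) := by
      intro κ
      have hmem : (g κ : FieldL k) ∈ IntermediateField.adjoin ℝ (Set.range v) :=
        (g κ).2
      obtain ⟨r, s, hrs⟩ :=
        (IntermediateField.mem_adjoin_range_iff ℝ v ((g κ : FieldL k))).mp hmem
      by_cases hs : aeval (sR k) s = 0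
      · refine ⟨0, 1, by simp, ?_⟩
        have hz : (g κ : FieldL k) = 0 := by
          rw [hrs, ← hcomp s, hs, map_zero, div_zero]
        rw [hz]; simp
      · refine ⟨r, s, hs, ?_⟩
        have hvs : aeval v s ≠ 0 := by
          rw [← hcomp]; exact fun h => hs (hφinj (by simpa using h))
        rw [hrs, hcomp s, hcomp r, div_mul_cancel₀ _ hvs]
    choose r s hs hgs using hden
    have hSne : φ (∏ κ : Irr k, aeval (sR k) (s κ)) ≠ 0 := by
      intro h
      have h' : (∏ κ : Irr k, aeval (sR k) (s κ)) = 0 := hφinj (by simpa using h)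
      obtain ⟨κ, _, hκ⟩ := Finset.prod_eq_zero_iff.mp h'
      exact hs κ hκ
    set P : Irr k → MvPolynomial (Fin k) ℝ :=
      fun κ => r κ * ∏ κ' ∈ Finset.univ.erase κ, s κ' with hPdef
    have haux : ∀ κ : Irr k, φ (aeval (sR k) (P κ))
        = (g κ : FieldL k) * φ (∏ κ' : Irr k, aeval (sR k) (s κ')) := by
      intro κ
      have h1 : aeval (sR k) (P κ)
          = aeval (sR k) (r κ) * ∏ κ' ∈ Finset.univ.erase κ, aeval (sR k) (s κ') := by
        rw [hPdef]; rw [map_mul, map_prod]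
      rw [h1, map_mul, map_prod, ← hgs κ,
        ← Finset.mul_prod_erase Finset.univ (fun κ' => aeval (sR k) (s κ'))
          (Finset.mem_univ κ), map_mul, map_prod]
      ring
    have hPsum : (∑ κ : Irr k, aeval (sR k) (P κ) * sIrr κ) = 0 := by
      apply hφinj
      rw [map_sum, map_zero]
      calc ∑ κ : Irr k, φ (aeval (sR k) (P κ) * sIrr κ)
          = ∑ κ : Irr k,
              ((g κ : FieldL k) * w κ) * φ (∏ κ' : Irr k, aeval (sR k) (s κ')) := by
            refine Finset.sum_congr rfl fun κ _ => ?_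
            rw [map_mul, haux κ]; ring
        _ = (∑ κ : Irr k, (g κ : FieldL k) * w κ)
              * φ (∏ κ' : Irr k, aeval (sR k) (s κ')) := (Finset.sum_mul _ _ _).symm
        _ = 0 := by
            rw [show (∑ κ : Irr k, (g κ : FieldL k) * w κ) = 0 from by
              simpa [hsmulK] using hg, zero_mul]
    have hP0 := key P hPsum κ₀
    have h2 := haux κ₀
    rw [hP0, map_zero, map_zero] at h2
    have h3 := (mul_eq_zero.mp h2.symm).resolve_right hSne
    exact_mod_cast h3
  have hspan' : ⊤ ≤ Submodule.span (FieldK k) (Set.range w) := by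
    rw [hMdef] at hspan; exact hspan
  let b : Module.Basis (Irr k) (FieldK k) (FieldL k) := Module.Basis.mk hind hspan'
  have hb : ∀ κ, b κ = w κ := fun κ => Module.Basis.mk_apply hind hspan' κ
  haveI hfd : FiniteDimensional (FieldK k) (FieldL k) :=
    Module.Finite.of_basis b
  haveI halg := Algebra.IsAlgebraic.of_finite (FieldK k) (FieldL k)
  refine ⟨fun a => Algebra.IsAlgebraic.isAlgebraic _, hfd, ?_, ⟨b, fun κ => ?_⟩⟩
  · rw [Module.finrank_eq_card_basis b, card_irr]
  · rw [hb κ, hwdef]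
end

section
/- Λ_{(k)} = ℝ[h_1,…,h_k] is an integral ring extension of 𝔸 = ℝ[s_{R_1},…,s_{R_k}]. -/
open MvPolynomial

/-- The weights: the variable `X i = h_{i+1}` has weight `i+1`. -/
def wt (k : ℕ) : Fin k → ℕ := fun i => i.val + 1

lemma hsym_hom {k : ℕ} {n : ℤ} (h : hsym k n ≠ 0) :
    0 ≤ n ∧ IsWeightedHomogeneous (wt k) (hsym k n) n.toNat := by
  unfold hsym at *
  split_ifs at * with h1 h2
  · refine ⟨by omega, ?_⟩
    have := isWeightedHomogeneous_X ℝ (wt k) (⟨(n-1).toNat, by omega⟩ : Fin k)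
    convert this using 1
    simp only [wt]; omega
  · exact ⟨by omega, by simpa [h2] using isWeightedHomogeneous_one ℝ (wt k)⟩
  · exact absurd rfl h

lemma zsmul_hom {k : ℕ} {w : Fin k → ℕ} {z : ℤ} {p : Lambdak k} {m : ℕ}
    (h : IsWeightedHomogeneous w p m) : IsWeightedHomogeneous w (z • p) m := by
  intro d hd
  apply h
  intro h0
  apply hd
  rw [MvPolynomial.coeff_smul, h0, smul_zero]

/-- `sR k a` is weighted homogeneous of degree `(a+1) * (k-a)`. -/
lemma sR_hom (k : ℕ) (a : Fin k) :
    IsWeightedHomogeneous (wt k) (sR k a) ((a.val + 1) * (k - a.val)) := by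
  unfold sR
  rw [Matrix.det_apply]
  apply IsWeightedHomogeneous.sum
  intro σ _
  rw [Units.smul_def]
  apply zsmul_hom
  by_cases hz : ∃ i, (Matrix.of fun i j : Fin (a.val + 1) =>
      hsym k ((((k : ℤ) - a.val) - i.val) + j.val)) (σ i) i = 0
  · obtain ⟨i, hi⟩ := hz
    rw [Finset.prod_eq_zero (f := fun b : Fin (a.val+1) => (Matrix.of fun i j : Fin (a.val + 1) =>
      hsym k ((((k : ℤ) - a.val) - i.val) + j.val)) (σ b) b) (Finset.mem_univ i) hi]
    exact isWeightedHomogeneous_zero ℝ _ _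
  · push_neg at hz
    have key : ∀ i : Fin (a.val + 1),
        0 ≤ (((k : ℤ) - a.val) - (σ i).val) + i.val ∧
        IsWeightedHomogeneous (wt k)
          ((Matrix.of fun i j : Fin (a.val + 1) =>
            hsym k ((((k : ℤ) - a.val) - i.val) + j.val)) (σ i) i)
          ((((k : ℤ) - a.val) - (σ i).val + i.val).toNat) := fun i => hsym_hom (hz i)
    have hdeg : (∑ i : Fin (a.val + 1),
        ((((k : ℤ) - a.val) - (σ i).val + i.val).toNat)) = (a.val + 1) * (k - a.val) := by
      have hcast : ((∑ i : Fin (a.val + 1),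
          ((((k : ℤ) - a.val) - (σ i).val + i.val).toNat) : ℕ) : ℤ)
          = ∑ i : Fin (a.val + 1), ((((k : ℤ) - a.val) - (σ i).val) + i.val) := by
        push_cast
        exact Finset.sum_congr rfl fun i _ => Int.toNat_of_nonneg (key i).1
      have hsum : ∑ i : Fin (a.val + 1), ((((k : ℤ) - a.val) - (σ i).val) + i.val)
          = (a.val + 1) * ((k : ℤ) - a.val) := by
        have hσ : ∑ i : Fin (a.val + 1), (((σ i).val : ℤ)) = ∑ i : Fin (a.val + 1), (i.val : ℤ) :=
          Equiv.sum_comp σ (fun j : Fin (a.val + 1) => (j.val : ℤ))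
        simp only [sub_add, Finset.sum_sub_distrib, hσ, Finset.sum_const, Finset.card_univ,
          Fintype.card_fin, sub_sub_cancel]
        ring
      have hav : a.val ≤ k := le_of_lt a.isLt
      have : ((((a.val + 1) * (k - a.val)) : ℕ) : ℤ) = (a.val + 1) * ((k : ℤ) - a.val) := by
        push_cast [Nat.cast_sub hav]; ring
      exact Nat.cast_injective (hcast.trans (hsum.trans this.symm))
    exact hdeg ▸ IsWeightedHomogeneous.prod Finset.univ _ _ (fun i _ => (key i).2)

/-- Multiplying by a weighted homogeneous polynomial shifts weighted homogeneous components. -/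
lemma whc_mul_right {k : ℕ} {w : Fin k → ℕ} {f g : MvPolynomial (Fin k) ℝ} {d e : ℕ}
    (hf : IsWeightedHomogeneous w f d) :
    weightedHomogeneousComponent w (e + d) (g * f) =
      weightedHomogeneousComponent w e g * f := by
  classical
  ext m
  rw [coeff_weightedHomogeneousComponent, coeff_mul, coeff_mul]
  split_ifs with h
  · refine Finset.sum_congr rfl ?_
    rintro ⟨m1, m2⟩ hmem
    simp only [Finset.HasAntidiagonal.mem_antidiagonal] at hmem
    by_cases hf2 : coeff m2 f = 0
    · simp [hf2]
    · have hd2 : (Finsupp.weight w) m2 = d := hf hf2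
      have h1 : (Finsupp.weight w) m1 = e := by
        have := map_add (Finsupp.weight w) m1 m2
        rw [hmem] at this
        omega
      rw [coeff_weightedHomogeneousComponent, if_pos h1]
  · refine (Finset.sum_eq_zero ?_).symm
    rintro ⟨m1, m2⟩ hmem
    simp only [Finset.HasAntidiagonal.mem_antidiagonal] at hmem
    by_cases hf2 : coeff m2 f = 0
    · simp [hf2]
    · have hd2 : (Finsupp.weight w) m2 = d := hf hf2
      have h1 : (Finsupp.weight w) m1 ≠ e := by
        intro h1
        apply h
        have h3 := map_add (Finsupp.weight w) m1 m2
        rw [hmem] at h3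
        omega
      rw [coeff_weightedHomogeneousComponent, if_neg h1, zero_mul]

/-- A weighted homogeneous polynomial has weighted total degree at most its degree. -/
lemma wtd_le_of_hom {k : ℕ} {w : Fin k → ℕ} {p : MvPolynomial (Fin k) ℝ} {D : ℕ}
    (h : IsWeightedHomogeneous w p D) : weightedTotalDegree w p ≤ D := by
  apply Finset.sup_le
  intro d hd
  exact le_of_eq (h (mem_support_iff.mp hd))

/-- If a prime ideal contains all the rectangle Schur functions, it contains every variable. -/
lemma X_mem_prime {k : ℕ} (P : Ideal (Lambdak k)) (hP : P.IsPrime)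
    (hsr : ∀ a, sR k a ∈ P) (i : Fin k) : X i ∈ P := by
  suffices H : ∀ m : ℕ, ∀ i : Fin k, k ≤ i.val + m → X i ∈ P from H k i (by omega)
  intro m
  induction m with
  | zero => intro i hi; exact absurd hi (by omega)
  | succ m ih =>
    intro i hi
    by_cases hcase : k ≤ i.val + m
    · exact ih i hcase
    have hik : i.val + m + 1 = k := by omega
    set a : Fin k := ⟨k - 1 - i.val, by omega⟩ with ha
    have hav : a.val = m := by simp [ha]; omega
    have hka : (k : ℤ) - a.val = i.val + 1 := by
      have : a.val = m := hav
      omega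
    let q := Ideal.Quotient.mk P
    have hdet : (((Matrix.of fun r c : Fin (a.val + 1) =>
        hsym k ((((k : ℤ) - a.val) - r.val) + c.val)).map q).det) = 0 := by
      rw [← RingHom.mapMatrix_apply, ← RingHom.map_det]
      exact Ideal.Quotient.eq_zero_iff_mem.mpr (hsr a)
    have habove : ∀ n : ℤ, (i.val : ℤ) + 1 < n → q (hsym k n) = 0 := by
      intro n hn
      unfold hsym
      split_ifs with h1 h2
      · refine Ideal.Quotient.eq_zero_iff_mem.mpr (ih ⟨(n-1).toNat, by omega⟩ ?_)
        simp only
        omega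
      · omega
      · exact map_zero q
    have htri : ((Matrix.of fun r c : Fin (a.val + 1) =>
        hsym k ((((k : ℤ) - a.val) - r.val) + c.val)).map q).BlockTriangular OrderDual.toDual := by
      intro r c hrc
      have hrc' : r.val < c.val := hrc
      simp only [Matrix.map_apply, Matrix.of_apply]
      exact habove _ (by omega)
    rw [Matrix.det_of_lowerTriangular _ htri] at hdet
    have hdiag : ∀ r : Fin (a.val + 1),
        ((Matrix.of fun r c : Fin (a.val + 1) =>
          hsym k ((((k : ℤ) - a.val) - r.val) + c.val)).map q) r r = q (X i) := by
      intro r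
      simp only [Matrix.map_apply, Matrix.of_apply]
      congr 1
      have : (((k : ℤ) - a.val) - r.val) + r.val = (i.val : ℤ) + 1 := by omega
      rw [this]
      unfold hsym
      rw [dif_pos ⟨by omega, by omega⟩]
      congr 1
      apply Fin.ext
      simp
    rw [Finset.prod_congr rfl (fun r _ => hdiag r), Finset.prod_const] at hdet
    haveI := hP
    have hzero : q (X i) = 0 :=
      pow_eq_zero_iff (n := Finset.univ.card (α := Fin (a.val+1))) (by simp) |>.mp hdet
    exact Ideal.Quotient.eq_zero_iff_mem.mp hzero

/-- `Λ_(k) = ℝ[h_1,…,h_k]` is an integral ring extension of the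
subalgebra `𝔸 = ℝ[s_{R_1},…,s_{R_k}]` generated by the rectangle Schur
functions. -/
theorem lambdak_isIntegral_over_rectangles (k : ℕ) (hk : 0 < k) :
    Algebra.IsIntegral (Algebra.adjoin ℝ (Set.range (sR k))) (Lambdak k) := by
  classical
  set A := Algebra.adjoin ℝ (Set.range (sR k)) with hA
  set I : Ideal (Lambdak k) := Ideal.span (Set.range (sR k)) with hI
  set w := wt k with hw
  -- each variable has a power in the ideal generated by the rectangles
  have hrad : ∀ i : Fin k, ∃ N0 : ℕ, (X i : Lambdak k) ^ N0 ∈ I := by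
    intro i
    have hmem : (X i : Lambdak k) ∈ I.radical := by
      rw [Ideal.radical_eq_sInf]
      refine Ideal.mem_sInf.mpr ?_
      rintro J ⟨hIJ, hJp⟩
      exact X_mem_prime J hJp (fun a => hIJ (Ideal.subset_span (Set.mem_range_self a))) i
    exact Ideal.mem_radical_iff.mp hmem
  choose N0 hN0 using hrad
  set N : ℕ := (∑ i, N0 i) + k * k + 1 with hN
  have hXN : ∀ i : Fin k, (X i : Lambdak k) ^ N ∈ I := by
    intro i
    have hle : N0 i ≤ N := by
      have := Finset.single_le_sum (f := N0) (fun j _ => Nat.zero_le _) (Finset.mem_univ i)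
      omega
    rw [show N = N0 i + (N - N0 i) by omega, pow_add]
    exact I.mul_mem_right _ (hN0 i)
  -- the degrees of the rectangles
  set D : Fin k → ℕ := fun a => (a.val + 1) * (k - a.val) with hD
  have hDpos : ∀ a : Fin k, 0 < D a := by
    intro a
    have : a.val < k := a.isLt
    simp only [hD]
    exact Nat.mul_pos (by omega) (by omega)
  have hDle : ∀ (a i : Fin k), D a ≤ N * (i.val + 1) := by
    intro a i
    have h1 : D a ≤ k * k := by
      simp only [hD]
      exact Nat.mul_le_mul (by omega) (by omega)
    have h2 : N ≤ N * (i.val + 1) := Nat.le_mul_of_pos_right N (by omega)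
    omega
  -- homogeneous form of the power relations
  have hrel : ∀ i : Fin k, ∃ g : Fin k → Lambdak k,
      ((X i : Lambdak k) ^ N = ∑ a, g a * sR k a) ∧
      ∀ a, IsWeightedHomogeneous w (g a) (N * (i.val + 1) - D a) := by
    intro i
    obtain ⟨c, hc⟩ := Ideal.mem_span_range_iff_exists_fun.mp (hXN i)
    have hXhom : IsWeightedHomogeneous w ((X i : Lambdak k) ^ N) (N * (i.val + 1)) := by
      rw [X_pow_eq_monomial]
      apply isWeightedHomogeneous_monomial
      simp [Finsupp.weight_apply, Finsupp.sum_single_index, hw, wt, smul_eq_mul]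
    refine ⟨fun a => weightedHomogeneousComponent w (N * (i.val + 1) - D a) (c a), ?_,
      fun a => weightedHomogeneousComponent_isWeightedHomogeneous _ _⟩
    calc (X i : Lambdak k) ^ N
        = weightedHomogeneousComponent w (N * (i.val + 1)) ((X i : Lambdak k) ^ N) :=
          (hXhom.weightedHomogeneousComponent_same).symm
      _ = weightedHomogeneousComponent w (N * (i.val + 1)) (∑ a, c a * sR k a) := by rw [hc]
      _ = ∑ a, weightedHomogeneousComponent w (N * (i.val + 1)) (c a * sR k a) :=
          map_sum _ _ _
      _ = ∑ a, weightedHomogeneousComponent w (N * (i.val + 1) - D a) (c a) * sR k a := by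
          refine Finset.sum_congr rfl fun a _ => ?_
          conv_lhs => rw [show N * (i.val + 1) = (N * (i.val + 1) - D a) + D a from
            (Nat.sub_add_cancel (hDle a i)).symm]
          exact whc_mul_right (sR_hom k a)
  -- the generating set: monomials with all exponents < N
  set S : Set (Lambdak k) := Set.range (fun f : Fin k → Fin N =>
    (monomial (Finsupp.equivFunOnFinite.symm fun j => ((f j : ℕ))) 1 : Lambdak k)) with hS
  have hSfin : S.Finite := Set.finite_range _
  have hsrA : ∀ a : Fin k, sR k a ∈ A := fun a => Algebra.subset_adjoin (Set.mem_range_self a)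
  -- the key spanning claim
  have key : ∀ n : ℕ, ∀ p : Lambdak k, weightedTotalDegree w p ≤ n →
      p ∈ Submodule.span A S := by
    intro n
    induction n using Nat.strong_induction_on with
    | _ n ih =>
    intro p hp
    rw [← support_sum_monomial_coeff p]
    apply Submodule.sum_mem
    intro m hm
    have hwm : Finsupp.weight w m ≤ n := le_trans (le_weightedTotalDegree w hm) hp
    by_cases hsmall : ∀ j : Fin k, m j < N
    · -- a generator, up to a scalar
      have hgen : (monomial m 1 : Lambdak k) ∈ S := by
        refine ⟨fun j => ⟨m j, hsmall j⟩, ?_⟩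
        simp only
        rw [show (fun j => ((⟨m j, hsmall j⟩ : Fin N) : ℕ)) = ⇑m from rfl,
          Finsupp.equivFunOnFinite_symm_coe]
      have hCmem : (C (coeff m p) : Lambdak k) ∈ A := by
        rw [← MvPolynomial.algebraMap_eq]
        exact A.algebraMap_mem _
      have hx := Submodule.smul_mem (Submodule.span A S) (⟨C (coeff m p), hCmem⟩ : A)
        (Submodule.subset_span hgen)
      have heq : (⟨C (coeff m p), hCmem⟩ : A) • (monomial m 1 : Lambdak k)
          = monomial m (coeff m p) := by
        rw [Algebra.smul_def]
        show (C (coeff m p) : Lambdak k) * monomial m 1 = _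
        rw [C_mul_monomial, mul_one]
      rwa [heq] at hx
    · push_neg at hsmall
      obtain ⟨i, hiN⟩ := hsmall
      obtain ⟨g, hg, hghom⟩ := hrel i
      set m' := m - Finsupp.single i N with hm'
      have hle : Finsupp.single i N ≤ m := by
        rw [Finsupp.single_le_iff]; exact hiN
      have hm'add : m' + Finsupp.single i N = m := tsub_add_cancel_of_le hle
      have hmono : (monomial m (coeff m p) : Lambdak k)
          = monomial m' (coeff m p) * (X i) ^ N := by
        rw [X_pow_eq_monomial, monomial_mul, mul_one, hm'add]
      have hsingleW : Finsupp.weight w (Finsupp.single i N) = N * (i.val + 1) := by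
        simp [Finsupp.weight_apply, Finsupp.sum_single_index, hw, wt, smul_eq_mul]
      have hweq : Finsupp.weight w m = Finsupp.weight w m' + N * (i.val + 1) := by
        have h3 := map_add (Finsupp.weight w) m' (Finsupp.single i N)
        rw [hm'add, hsingleW] at h3
        exact h3
      rw [hmono, hg, Finset.mul_sum]
      apply Submodule.sum_mem
      intro a _
      have hterm : monomial m' (coeff m p) * (g a * sR k a)
          = (⟨sR k a, hsrA a⟩ : A) • (monomial m' (coeff m p) * g a) := by
        rw [Algebra.smul_def]
        show _ = (sR k a : Lambdak k) * _
        ring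
      rw [hterm]
      apply Submodule.smul_mem
      -- the remaining factor has strictly smaller weighted degree
      have hhom : IsWeightedHomogeneous w (monomial m' (coeff m p) * g a)
          (Finsupp.weight w m' + (N * (i.val + 1) - D a)) :=
        (isWeightedHomogeneous_monomial w m' _ rfl).mul (hghom a)
      refine ih (Finsupp.weight w m' + (N * (i.val + 1) - D a)) ?_ _ (wtd_le_of_hom hhom)
      have := hDpos a
      have := hDle a i
      omega
  have hspan : Submodule.span A S = ⊤ := by
    rw [Submodule.eq_top_iff']
    intro p
    exact key (weightedTotalDegree w p) p le_rfl
  haveI : Module.Finite A (Lambdak k) :=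
    ⟨⟨hSfin.toFinset, by rw [Set.Finite.coe_toFinset]; exact hspan⟩⟩
  exact Algebra.IsIntegral.of_finite A (Lambdak k)
end
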